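/- arXiv:1412.7252 — 4 statements merged into one kernel-verified Lean document; each statement's English description precedes it below -/
import Mathlib

section
/- Two great-circle arcs on the unit sphere S², each of length strictly greater than π, that share a common endpoint must intersect in at least two points. -/
/-- The point at angle `t` on the great circle through the orthonormal pair `p, q`. -/
noncomputable def arcPt (p q : EuclideanSpace ℝ (Fin 3)) (t : ℝ) : EuclideanSpace ℝ (Fin 3) :=
  Real.cos t • p + Real.sin t • q

/-- `p, q` is an orthonormal pair in `ℝ³` (so `arcPt p q` parametrizes a great circle
of the unit sphere by arc length). -/
def IsFrame (p q : EuclideanSpace ℝ (Fin 3)) : Prop :=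
  ‖p‖ = 1 ∧ ‖q‖ = 1 ∧ inner ℝ p q = (0 : ℝ)

/-- The great-circle arc of length `L` starting at `p` in the direction of `q`. -/
noncomputable def arcSet (p q : EuclideanSpace ℝ (Fin 3)) (L : ℝ) :
    Set (EuclideanSpace ℝ (Fin 3)) :=
  arcPt p q '' Set.Icc 0 L

lemma arcPt_zero (p q : EuclideanSpace ℝ (Fin 3)) : arcPt p q 0 = p := by
  simp [arcPt]

lemma arcPt_add_pi (p q : EuclideanSpace ℝ (Fin 3)) (t : ℝ) :
    arcPt p q (t + Real.pi) = - arcPt p q t := by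
  simp only [arcPt, Real.cos_add_pi, Real.sin_add_pi, neg_smul, neg_add]

lemma norm_arcPt (p q : EuclideanSpace ℝ (Fin 3)) (hf : IsFrame p q) (t : ℝ) :
    ‖arcPt p q t‖ = 1 := by
  obtain ⟨hp, hq, hpq⟩ := hf
  have h : ‖arcPt p q t‖ ^ 2 = 1 := by
    rw [arcPt, norm_add_sq_real]
    rw [norm_smul, norm_smul, real_inner_smul_left, real_inner_smul_right, hpq, hp, hq]
    simp [abs_mul_abs_self, mul_pow, sq_abs]
  nlinarith [norm_nonneg (arcPt p q t)]

/-- An arc of length > π contains the antipode of each of its endpoints;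
in particular both a shared endpoint and its antipode lie on the arc. -/
lemma mem_arc (p q : EuclideanSpace ℝ (Fin 3)) (L : ℝ) (hL : Real.pi < L)
    (x : EuclideanSpace ℝ (Fin 3))
    (hx : x ∈ ({p, arcPt p q L} : Set (EuclideanSpace ℝ (Fin 3)))) :
    x ∈ arcSet p q L ∧ -x ∈ arcSet p q L := by
  have hpi := Real.pi_pos
  rcases hx with hx | hx
  · constructor
    · exact ⟨0, ⟨le_refl 0, by linarith⟩, by rw [arcPt_zero, hx]⟩
    · refine ⟨Real.pi, ⟨by linarith, by linarith⟩, ?_⟩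
      have h := arcPt_add_pi p q 0
      rw [zero_add, arcPt_zero] at h
      rw [h, hx]
  · simp only [Set.mem_singleton_iff] at hx
    constructor
    · exact ⟨L, ⟨by linarith, le_refl L⟩, hx.symm⟩
    · refine ⟨L - Real.pi, ⟨by linarith, by linarith⟩, ?_⟩
      have h := arcPt_add_pi p q (L - Real.pi)
      rw [sub_add_cancel] at h
      rw [hx, h, neg_neg]

/-- Two great-circle arcs on the unit sphere, each of arc length strictly greater than `π`,
that share a common endpoint, intersect in at least two points. -/
theorem stmt0 (p q p' q' : EuclideanSpace ℝ (Fin 3)) (L L' : ℝ)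
    (hf : IsFrame p q) (hf' : IsFrame p' q')
    (hL : Real.pi < L) (hL' : Real.pi < L')
    (hshare : ∃ x, x ∈ ({p, arcPt p q L} : Set (EuclideanSpace ℝ (Fin 3))) ∧
      x ∈ ({p', arcPt p' q' L'} : Set (EuclideanSpace ℝ (Fin 3)))) :
    ∃ x y, x ≠ y ∧ x ∈ arcSet p q L ∩ arcSet p' q' L' ∧
      y ∈ arcSet p q L ∩ arcSet p' q' L' := by
  obtain ⟨x, hx1, hx2⟩ := hshare
  obtain ⟨h1, h1'⟩ := mem_arc p q L hL x hx1
  obtain ⟨h2, h2'⟩ := mem_arc p' q' L' hL' x hx2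
  have hxnorm : ‖x‖ = 1 := by
    rcases hx1 with h | h
    · subst h; exact hf.1
    · simp only [Set.mem_singleton_iff] at h; subst h; exact norm_arcPt p q hf L
  refine ⟨x, -x, ?_, ⟨h1, h2⟩, ⟨h1', h2'⟩⟩
  intro h
  have h2 : (2 : ℝ) • x = 0 := by
    rw [two_smul]; nth_rewrite 1 [h]; exact neg_add_cancel x
  have hx0 : x = 0 := (smul_eq_zero.mp h2).resolve_left (by norm_num)
  rw [hx0] at hxnorm
  simp at hxnorm
end

section
/- A cycle of odd length in which any two (cyclically) consecutive distinct long edges are separated by an odd number of short edges, and in which no two long edges are adjacent, contains at most one long edge. -/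
/-- Consider a cyclic sequence of `m` edges (indexed by `ZMod m`), each labeled
long (`long i`) or short.  Suppose no two cyclically adjacent edges are both long, and
any two cyclically consecutive distinct long edges are separated by an odd number of
short edges: if the edges at positions `i` and `i + k` (for some `0 < k < m`) are long
and all edges strictly between them are short, then `k - 1` is odd.  If `m` is odd,
then at most one edge is long. -/
theorem stmt7 (m : ℕ) (hm : Odd m) (long : ZMod m → Prop)
    (hadj : ∀ i : ZMod m, ¬ (long i ∧ long (i + 1)))
    (hsep : ∀ (i : ZMod m) (k : ℕ), 0 < k → k < m → long i → long (i + (k : ZMod m)) →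
      (∀ j : ℕ, 0 < j → j < k → ¬ long (i + (j : ZMod m))) → Odd (k - 1)) :
    ∀ i j : ZMod m, long i → long j → i = j := by
  classical
  intro i j hi hj
  by_contra hne
  have hm0 : m ≠ 0 := by rintro rfl; simp at hm
  haveI : NeZero m := ⟨hm0⟩
  set P : ℕ → Prop := fun b => long (i + (b : ZMod m)) with hPdef
  have hP0 : P 0 := by simpa [P] using hi
  -- every index a < m with long (i + a) is even
  have key : ∀ a, a < m → P a → Even a := by
    intro a
    induction a using Nat.strong_induction_on with
    | _ a IH =>
      intro ham ha
      rcases Nat.eq_zero_or_pos a with rfl | hapos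
      · exact Even.zero
      set b := Nat.findGreatest P (a - 1) with hb
      have hPb : P b := Nat.findGreatest_spec (Nat.zero_le _) hP0
      have hble : b ≤ a - 1 := Nat.findGreatest_le _
      have hba : b < a := lt_of_le_of_lt hble (Nat.sub_lt hapos one_pos)
      have hlong2 : long (i + (b : ZMod m) + ((a - b : ℕ) : ZMod m)) := by
        have : (i + (b : ZMod m) + ((a - b : ℕ) : ZMod m)) = i + (a : ZMod m) := by
          push_cast [Nat.cast_sub hba.le]
          ring
        rw [this]; exact ha
      have hbetween : ∀ jj : ℕ, 0 < jj → jj < a - b →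
          ¬ long (i + (b : ZMod m) + (jj : ZMod m)) := by
        intro jj hjj0 hjjk hlo
        have hPbj : P (b + jj) := by
          show long (i + ((b + jj : ℕ) : ZMod m))
          push_cast
          rw [← add_assoc]; exact hlo
        exact Nat.findGreatest_is_greatest (P := P) (n := a - 1) (by omega) (by omega) hPbj
      have hodd := hsep (i + (b : ZMod m)) (a - b) (by omega)
        (by omega) hPb hlong2 hbetween
      have heab : Even (a - b) := by
        rcases hodd with ⟨t, ht⟩
        exact ⟨t + 1, by omega⟩
      have heb : Even b := IH b hba (by omega) hPb
      have : a = b + (a - b) := by omega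
      rw [this]; exact heb.add heab
  -- second long edge gives a positive witness
  set v := (j - i).val with hv
  have hvm : v < m := ZMod.val_lt _
  have hv0 : v ≠ 0 := by
    intro h
    have : j - i = 0 := by rwa [← ZMod.val_eq_zero]
    apply hne
    have := sub_eq_zero.mp this
    exact this.symm
  have hPv : P v := by
    show long (i + ((j - i).val : ZMod m))
    rw [ZMod.natCast_val, ZMod.cast_id]
    simpa using hj
  set M := Nat.findGreatest P (m - 1) with hM
  have hPM : P M := Nat.findGreatest_spec (by omega) hPv
  have hMle : M ≤ m - 1 := Nat.findGreatest_le _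
  have hMge : v ≤ M := Nat.le_findGreatest (by omega) hPv
  have hMpos : 0 < M := by omega
  have hEvenM : Even M := key M (by omega) hPM
  -- wrap-around gap
  have hlong2 : long (i + (M : ZMod m) + ((m - M : ℕ) : ZMod m)) := by
    have : (i + (M : ZMod m) + ((m - M : ℕ) : ZMod m)) = i := by
      push_cast [Nat.cast_sub (by omega : M ≤ m)]
      simp [ZMod.natCast_self]
    rw [this]; exact hi
  have hbetween : ∀ jj : ℕ, 0 < jj → jj < m - M →
      ¬ long (i + (M : ZMod m) + (jj : ZMod m)) := by
    intro jj hjj0 hjjk hlo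
    have hPMj : P (M + jj) := by
      show long (i + ((M + jj : ℕ) : ZMod m))
      push_cast
      rw [← add_assoc]; exact hlo
    exact Nat.findGreatest_is_greatest (P := P) (n := m - 1) (by omega) (by omega) hPMj
  have hodd := hsep (i + (M : ZMod m)) (m - M) (by omega) (by omega) hPM hlong2 hbetween
  rcases hodd with ⟨t, ht⟩
  rcases hEvenM with ⟨s, hs⟩
  rcases hm with ⟨u, hu⟩
  omega
end

section
/- Let e_1 e_2 … e_{2n} be a cyclic sequence of great-circle arcs on S² (n ≥ 3), each of length strictly less than π, forming a closed cycle (the endpoint of e_i is the starting point of e_{i+1}, indices mod 2n), such that every non-adjacent pair of arcs crosses transversally exactly once and adjacent arcs meet only at their common endpoint, and such that all consecutive crossing orientations χ(e_i, e_{i+1}) are equal to +1. Then a contradiction follows; i.e., such a configuration does not exist. -/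
/-- The interior of that arc. -/
noncomputable def arcInt (p q : EuclideanSpace ℝ (Fin 3)) (L : ℝ) :
    Set (EuclideanSpace ℝ (Fin 3)) :=
  arcPt p q '' Set.Ioo 0 L

/-- The (unique) great circle containing the arc with frame `p, q`. -/
def frameCircle (p q : EuclideanSpace ℝ (Fin 3)) : Set (EuclideanSpace ℝ (Fin 3)) :=
  {x | ‖x‖ = 1 ∧ x ∈ Submodule.span ℝ ({p, q} : Set (EuclideanSpace ℝ (Fin 3)))}

/-- Scalar triple product of three vectors of `ℝ³`. -/
def triple (u v w : EuclideanSpace ℝ (Fin 3)) : ℝ :=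
  u 0 * (v 1 * w 2 - v 2 * w 1) - u 1 * (v 0 * w 2 - v 2 * w 0) + u 2 * (v 0 * w 1 - v 1 * w 0)

/-- The unit tangent direction of the arc with frame `p, q` at the parameter `t`. -/
noncomputable def arcTangent (p q : EuclideanSpace ℝ (Fin 3)) (t : ℝ) :
    EuclideanSpace ℝ (Fin 3) :=
  (-Real.sin t) • p + Real.cos t • q

/-! ### Auxiliary material -/

/-- Plain dot product of two vectors of `ℝ³`. -/
def dot3 (u v : EuclideanSpace ℝ (Fin 3)) : ℝ := u 0 * v 0 + u 1 * v 1 + u 2 * v 2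

/-- Coordinates of the cross product. -/
def nvec (p q : EuclideanSpace ℝ (Fin 3)) : Fin 3 → ℝ :=
  ![p 1 * q 2 - p 2 * q 1, p 2 * q 0 - p 0 * q 2, p 0 * q 1 - p 1 * q 0]

lemma triple_arcPt (p q w z : EuclideanSpace ℝ (Fin 3)) (t : ℝ) :
    triple (arcPt p q t) w z = Real.cos t * triple p w z + Real.sin t * triple q w z := by
  simp only [triple, arcPt, PiLp.add_apply, PiLp.smul_apply, smul_eq_mul]; ring

lemma triple_arcTangent (p q w z : EuclideanSpace ℝ (Fin 3)) (t : ℝ) :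
    triple (arcTangent p q t) w z
      = -Real.sin t * triple p w z + Real.cos t * triple q w z := by
  simp only [triple, arcTangent, PiLp.add_apply, PiLp.smul_apply, smul_eq_mul]; ring

lemma tangent_triple (p q w : EuclideanSpace ℝ (Fin 3)) (L : ℝ) :
    triple (arcTangent p q L) w (arcPt p q L) = triple w p q := by
  simp only [triple, arcTangent, arcPt, PiLp.add_apply, PiLp.smul_apply, smul_eq_mul]
  linear_combination (w 0 * (p 1 * q 2 - p 2 * q 1) - w 1 * (p 0 * q 2 - p 2 * q 0)
    + w 2 * (p 0 * q 1 - p 1 * q 0)) * (Real.sin_sq_add_cos_sq L)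

lemma triple_swap (u p q : EuclideanSpace ℝ (Fin 3)) : triple u q p = - triple u p q := by
  simp only [triple]; ring

lemma triple_left (p q : EuclideanSpace ℝ (Fin 3)) : triple p p q = 0 := by
  simp only [triple]; ring

lemma triple_left' (p q : EuclideanSpace ℝ (Fin 3)) : triple q p q = 0 := by
  simp only [triple]; ring

lemma master (x p q : EuclideanSpace ℝ (Fin 3)) (i : Fin 3) :
    x i * ((dot3 p p) * (dot3 q q) - (dot3 p q)^2)
      = (triple x p q) * nvec p q i
        + (dot3 x p) * (p i * dot3 q q - q i * dot3 p q)
        + (dot3 x q) * (q i * dot3 p p - p i * dot3 p q) := by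
  fin_cases i <;> (simp [dot3, triple, nvec]; ring)

lemma dot3_of_inner (p q : EuclideanSpace ℝ (Fin 3)) (h : inner ℝ p q = (0:ℝ)) : dot3 p q = 0 := by
  rw [← h, PiLp.inner_apply]; simp [Fin.sum_univ_three, dot3, mul_comm]

lemma dot3_of_norm (p : EuclideanSpace ℝ (Fin 3)) (h : ‖p‖ = 1) : dot3 p p = 1 := by
  have h2 : (inner ℝ p p : ℝ) = 1 := by rw [real_inner_self_eq_norm_sq, h]; norm_num
  rw [← h2, PiLp.inner_apply]; simp [Fin.sum_univ_three, dot3, mul_comm]; ring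

lemma decomp (p q x : EuclideanSpace ℝ (Fin 3)) (hpp : dot3 p p = 1) (hqq : dot3 q q = 1)
    (hpq : dot3 p q = 0) (hx : triple x p q = 0) :
    x = (dot3 x p) • p + (dot3 x q) • q := by
  ext i
  have h := master x p q i
  rw [hpp, hqq, hpq, hx] at h
  simp only [PiLp.add_apply, PiLp.smul_apply, smul_eq_mul]
  nlinarith [h]

/-- If an orthonormal frame `p', q'` is orthogonal to the normal of the frame `p, q`, the
two great circles coincide. -/
lemma frame_circle_eq (p q p' q' : EuclideanSpace ℝ (Fin 3))
    (hf : IsFrame p q) (hf' : IsFrame p' q')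
    (h1 : triple p' p q = 0) (h2 : triple q' p q = 0) :
    frameCircle p' q' = frameCircle p q := by
  obtain ⟨hp1, hq1, hpq0⟩ := hf
  obtain ⟨hp1', hq1', hpq0'⟩ := hf'
  have hpp := dot3_of_norm p hp1
  have hqq := dot3_of_norm q hq1
  have hpq := dot3_of_inner p q hpq0
  set a := dot3 p' p with ha
  set b := dot3 p' q with hb
  set c := dot3 q' p with hc
  set d := dot3 q' q with hd
  have hp' : p' = a • p + b • q := decomp p q p' hpp hqq hpq h1
  have hq' : q' = c • p + d • q := decomp p q q' hpp hqq hpq h2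
  have e1 : a^2 + b^2 = 1 := by
    have h0 := dot3_of_norm p' hp1'
    have h3 : dot3 p' p' = a^2 * dot3 p p + 2*a*b*dot3 p q + b^2 * dot3 q q := by
      rw [hp']
      simp only [dot3, PiLp.add_apply, PiLp.smul_apply, smul_eq_mul, ha, hb]
      ring
    rw [hpp, hqq, hpq] at h3; nlinarith [h0, h3]
  have e2 : c^2 + d^2 = 1 := by
    have h0 := dot3_of_norm q' hq1'
    have h3 : dot3 q' q' = c^2 * dot3 p p + 2*c*d*dot3 p q + d^2 * dot3 q q := by
      rw [hq']
      simp only [dot3, PiLp.add_apply, PiLp.smul_apply, smul_eq_mul, hc, hd]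
      ring
    rw [hpp, hqq, hpq] at h3; nlinarith [h0, h3]
  have e3 : a*c + b*d = 0 := by
    have h0 := dot3_of_inner p' q' hpq0'
    have h3 : dot3 p' q' = a*c * dot3 p p + (a*d + b*c)*dot3 p q + b*d * dot3 q q := by
      rw [hp', hq']
      simp only [dot3, PiLp.add_apply, PiLp.smul_apply, smul_eq_mul, ha, hb, hc, hd]
      ring
    rw [hpp, hqq, hpq] at h3; nlinarith [h0, h3]
  set Δ := a*d - b*c with hΔdef
  have hΔ : Δ^2 = 1 := by
    rw [hΔdef]; linear_combination (c^2+d^2)*e1 + e2 - (a*c+b*d)*e3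
  have key : ∀ x : EuclideanSpace ℝ (Fin 3),
      x ∈ Submodule.span ℝ ({p', q'} : Set (EuclideanSpace ℝ (Fin 3))) ↔
      x ∈ Submodule.span ℝ ({p, q} : Set (EuclideanSpace ℝ (Fin 3))) := by
    intro x
    rw [Submodule.mem_span_pair, Submodule.mem_span_pair]
    constructor
    · rintro ⟨m, k, rfl⟩
      exact ⟨m*a + k*c, m*b + k*d, by rw [hp', hq']; module⟩
    · rintro ⟨m, k, rfl⟩
      refine ⟨m*(Δ*d) + k*(-(Δ*c)), m*(-(Δ*b)) + k*(Δ*a), ?_⟩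
      rw [hp', hq']
      match_scalars
      · linear_combination m*hΔ
      · linear_combination k*hΔ
  ext x
  simp only [frameCircle, Set.mem_setOf_eq]
  rw [key]

/-- There is no closed cycle `e₁ … e₂ₙ` (`n ≥ 3`) of great-circle arcs, all of length `< π`
("short"), in which adjacent arcs meet only at their common endpoint, every
non-adjacent pair of arcs crosses transversally in exactly one point (they lie on distinct
great circles and the unique common point is interior to both), and all consecutive
crossing orientations `χ(eᵢ, eᵢ₊₁)` (the sign of the scalar triple product of the tangent
of `eᵢ` at the common endpoint, the tangent of `eᵢ₊₁` there, and the outward normal) are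
equal to `+1`. -/
theorem stmt9 (n : ℕ) (hn : 3 ≤ n)
    (p q : ZMod (2 * n) → EuclideanSpace ℝ (Fin 3)) (L : ZMod (2 * n) → ℝ)
    (hframe : ∀ i, IsFrame (p i) (q i))
    (hshort : ∀ i, 0 < L i ∧ L i < Real.pi)
    (hclosed : ∀ i, arcPt (p i) (q i) (L i) = p (i + 1))
    (hadj : ∀ i, arcSet (p i) (q i) (L i) ∩ arcSet (p (i + 1)) (q (i + 1)) (L (i + 1))
      = {p (i + 1)})
    (hcross : ∀ i j : ZMod (2 * n), i ≠ j → i + 1 ≠ j → j + 1 ≠ i →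
      frameCircle (p i) (q i) ≠ frameCircle (p j) (q j) ∧
      ∃ x, arcSet (p i) (q i) (L i) ∩ arcSet (p j) (q j) (L j) = {x} ∧
        x ∈ arcInt (p i) (q i) (L i) ∧ x ∈ arcInt (p j) (q j) (L j))
    (horient : ∀ i, 0 < triple (arcTangent (p i) (q i) (L i)) (q (i + 1)) (p (i + 1))) :
    False := by
  haveI : NeZero (2*n) := ⟨by omega⟩
  -- the "height" of the various frame vectors over the plane of the great circle of arc 0
  set A : ℕ → ℝ := fun j => triple (p ((j : ℕ) : ZMod (2*n))) (p 0) (q 0) with hA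
  set B : ℕ → ℝ := fun j => triple (q ((j : ℕ) : ZMod (2*n))) (p 0) (q 0) with hB
  -- injectivity of casts
  have hinj : ∀ a b : ℕ, a < 2*n → b < 2*n → ((a : ℕ) : ZMod (2*n)) = b → a = b := by
    intro a b haa hbb h
    have := congrArg ZMod.val h
    rwa [ZMod.val_cast_of_lt haa, ZMod.val_cast_of_lt hbb] at this
  have hcast1 : ∀ j : ℕ, ((j+1 : ℕ) : ZMod (2*n)) = ((j : ℕ) : ZMod (2*n)) + 1 := by
    intro j; push_cast; ring
  -- the recursion for A along the cycle
  have tripAB : ∀ j : ℕ, A (j+1)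
      = Real.cos (L ((j:ℕ) : ZMod (2*n))) * A j + Real.sin (L ((j:ℕ) : ZMod (2*n))) * B j := by
    intro j
    show triple (p ((j+1 : ℕ) : ZMod (2*n))) (p 0) (q 0) = _
    rw [hcast1 j, ← hclosed ((j:ℕ) : ZMod (2*n)), triple_arcPt]
  have hA0 : A 0 = 0 := by
    show triple (p ((0:ℕ) : ZMod (2*n))) (p 0) (q 0) = 0
    rw [Nat.cast_zero]; exact triple_left _ _
  have hB0 : B 0 = 0 := by
    show triple (q ((0:ℕ) : ZMod (2*n))) (p 0) (q 0) = 0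
    rw [Nat.cast_zero]; exact triple_left' _ _
  have hA1 : A 1 = 0 := by
    rw [show (1:ℕ) = 0 + 1 from rfl, tripAB 0, hA0, hB0]; ring
  -- start positivity
  have hB1 : 0 < B 1 := by
    have h := horient 0
    rw [← hclosed 0, tangent_triple] at h
    show 0 < triple (q ((1:ℕ) : ZMod (2*n))) (p 0) (q 0)
    rw [Nat.cast_one]
    simpa using h
  have hA2 : 0 < A 2 := by
    have hs := hshort ((1:ℕ) : ZMod (2*n))
    have hsin : 0 < Real.sin (L ((1:ℕ) : ZMod (2*n))) :=
      Real.sin_pos_of_pos_of_lt_pi hs.1 hs.2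
    have := tripAB 1
    rw [hA1] at this
    rw [show (2:ℕ) = 1 + 1 from rfl, this]
    have := mul_pos hsin hB1
    linarith
  -- end positivity
  have hAend : 0 < A (2*n - 1) := by
    set i : ZMod (2*n) := ((2*n - 1 : ℕ) : ZMod (2*n)) with hi
    have hi1 : i + 1 = 0 := by
      rw [hi, ← hcast1 (2*n-1), show 2*n - 1 + 1 = 2*n from by omega]
      exact ZMod.natCast_self (2*n)
    have hcl : arcPt (p i) (q i) (L i) = p 0 := by rw [hclosed i, hi1]
    have hor := horient i
    rw [hi1] at hor
    -- T = triple (tangent at end) (p 0) (q 0) < 0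
    have hT : triple (arcTangent (p i) (q i) (L i)) (p 0) (q 0) < 0 := by
      have := triple_swap (arcTangent (p i) (q i) (L i)) (p 0) (q 0)
      linarith [hor, this.symm.le, this]
    -- the endpoint lies in the plane of circle 0
    have hC : Real.cos (L i) * A (2*n-1) + Real.sin (L i) * B (2*n-1) = 0 := by
      have h0 : triple (arcPt (p i) (q i) (L i)) (p 0) (q 0) = 0 := by
        rw [hcl]; exact triple_left _ _
      rw [triple_arcPt] at h0
      exact h0
    have hTexp : triple (arcTangent (p i) (q i) (L i)) (p 0) (q 0)
        = -Real.sin (L i) * A (2*n-1) + Real.cos (L i) * B (2*n-1) :=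
      triple_arcTangent _ _ _ _ _
    have hs := hshort i
    have hsin : 0 < Real.sin (L i) := Real.sin_pos_of_pos_of_lt_pi hs.1 hs.2
    have hkey : A (2*n-1) = -Real.sin (L i)
        * triple (arcTangent (p i) (q i) (L i)) (p 0) (q 0) := by
      rw [hTexp]
      linear_combination (Real.cos (L i)) * hC - (A (2*n-1)) * (Real.sin_sq_add_cos_sq (L i))
    rw [hkey]
    have := mul_pos hsin (neg_pos.mpr hT)
    nlinarith [this]
  -- alternation along the middle arcs
  have mid : ∀ j : ℕ, 2 ≤ j → j ≤ 2*n - 2 → A j * A (j+1) < 0 := by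
    intro j hj2 hj22
    set i : ZMod (2*n) := ((j : ℕ) : ZMod (2*n)) with hi
    have hne1 : (0 : ZMod (2*n)) ≠ i := by
      intro h
      rw [hi] at h
      have : (0:ℕ) = j := hinj 0 j (by omega) (by omega) (by simpa using h)
      omega
    have hne2 : (0 : ZMod (2*n)) + 1 ≠ i := by
      intro h
      rw [hi] at h
      have : (1:ℕ) = j := hinj 1 j (by omega) (by omega) (by simpa using h)
      omega
    have hne3 : i + 1 ≠ 0 := by
      intro h
      rw [hi] at h
      have : (j+1 : ℕ) = 0 := hinj (j+1) 0 (by omega) (by omega)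
        (by push_cast; simpa using h)
      omega
    obtain ⟨hcirc, x, hsing, hx0, hxj⟩ := hcross 0 i hne1 hne2 hne3
    obtain ⟨u, hu, hxu⟩ := hx0
    obtain ⟨s, hs, hxs⟩ := hxj
    -- the crossing point lies in circle 0's plane
    have hxplane : triple x (p 0) (q 0) = 0 := by
      rw [← hxu, triple_arcPt, triple_left, triple_left']; ring
    have hC : Real.cos s * A j + Real.sin s * B j = 0 := by
      have := hxplane
      rw [← hxs, triple_arcPt] at this
      exact this
    have hsL := hshort i
    have hs0 : 0 < s := hs.1
    have hsLi : s < L i := hs.2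
    have hsin : 0 < Real.sin s :=
      Real.sin_pos_of_pos_of_lt_pi hs0 (lt_trans hsLi hsL.2)
    set K : ℝ := Real.sin s * A j - Real.cos s * B j with hK
    have hKne : K ≠ 0 := by
      intro hK0
      have hAj : A j = 0 := by
        have : A j = Real.sin s * K + Real.cos s * (Real.cos s * A j + Real.sin s * B j) := by
          rw [hK]
          linear_combination -(A j) * (Real.sin_sq_add_cos_sq s)
        rw [hK0, hC] at this
        simpa using this
      have hBj : B j = 0 := by
        have : Real.sin s * B j = 0 := by
          rw [hAj] at hC; linarith [hC]
        rcases mul_eq_zero.mp this with h | h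
        · exact absurd h (ne_of_gt hsin)
        · exact h
      exact hcirc (frame_circle_eq (p 0) (q 0) (p i) (q i) (hframe 0) (hframe i) hAj hBj).symm
    have hAjK : A j = Real.sin s * K := by
      rw [hK]
      linear_combination (Real.cos s) * hC - (A j) * (Real.sin_sq_add_cos_sq s)
    have hAj1K : A (j+1) = K * Real.sin (s - L i) := by
      rw [Real.sin_sub, tripAB j, ← hi, hK]
      linear_combination (Real.cos s * Real.cos (L i) + Real.sin s * Real.sin (L i)) * hC
        - (A j * Real.cos (L i) + B j * Real.sin (L i)) * (Real.sin_sq_add_cos_sq s)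
    have hsneg : Real.sin (s - L i) < 0 := by
      have h1 : s - L i < 0 := by linarith
      have h2 : -Real.pi < s - L i := by linarith [hsL.2, hs0]
      have := Real.sin_pos_of_pos_of_lt_pi (show (0:ℝ) < L i - s by linarith)
        (by linarith [hsL.2])
      rw [show s - L i = -(L i - s) from by ring, Real.sin_neg]
      linarith
    have hprod : A j * A (j+1) = K^2 * (Real.sin s * Real.sin (s - L i)) := by
      rw [hAjK, hAj1K]; ring
    rw [hprod]
    have hK2 : 0 < K^2 := lt_of_le_of_ne (sq_nonneg K) (Ne.symm (pow_ne_zero 2 hKne))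
    exact mul_neg_of_pos_of_neg hK2 (mul_neg_of_pos_of_neg hsin hsneg)
  -- the sign alternation by induction
  have alt : ∀ k : ℕ, 2 ≤ k → k ≤ 2*n - 1 → ((Even k → 0 < A k) ∧ (Odd k → A k < 0)) := by
    intro k
    induction k with
    | zero => intro h; omega
    | succ k ih =>
      intro h2 h3
      rcases Nat.lt_or_ge k 2 with hk | hk
      · -- k + 1 = 2
        have hk2 : k + 1 = 2 := by omega
        constructor
        · intro _; rw [hk2]; exact hA2
        · intro hodd; rw [hk2] at hodd; exact absurd hodd (by decide)
      · have ihh := ih (by omega) (by omega)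
        have hm := mid k hk (by omega)
        constructor
        · intro hev
          have hodd : Odd k := by
            rcases Nat.even_or_odd k with h | h
            · exact absurd hev (Nat.not_even_iff_odd.mpr (Even.add_one h))
            · exact h
          have := ihh.2 hodd
          nlinarith [hm, this]
        · intro hodd
          have hev : Even k := by
            rcases Nat.even_or_odd k with h | h
            · exact h
            · exact absurd (Odd.add_one h) (Nat.not_even_iff_odd.mpr hodd)
          have := ihh.1 hev
          nlinarith [hm, this]
  have hodd : Odd (2*n - 1) := ⟨n - 1, by omega⟩
  have := (alt (2*n-1) (by omega) (le_refl _)).2 hodd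
  linarith [hAend]
end

section
/- Let u_1, …, u_k be nonzero vectors in the plane R² with k ≥ 5, pairwise non-parallel. If 0 lies in the interior of the convex hull of {u_1, …, u_k}, then there exist at least three indices i such that the line through the origin in direction u_i separates two of the other vectors, i.e., there exist j, l ≠ i with u_j and u_l strictly on opposite sides of the line R·u_i. -/
/-- The determinant of two planar vectors. -/
def det2 (u w : EuclideanSpace ℝ (Fin 2)) : ℝ := u 0 * w 1 - u 1 * w 0

lemma det2_smul (a : EuclideanSpace ℝ (Fin 2)) (c : ℝ) (v : EuclideanSpace ℝ (Fin 2)) :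
    det2 a (c • v) = c * det2 a v := by
  simp [det2, PiLp.smul_apply, smul_eq_mul]; ring

/-- If some vector `v` has negative determinant against `a`, and `0` is interior to the hull
of the range of `u`, then some `u j` has negative determinant against `a`. -/
lemma key (k : ℕ) (u : Fin k → EuclideanSpace ℝ (Fin 2))
    (hhull : (0 : EuclideanSpace ℝ (Fin 2)) ∈ interior (convexHull ℝ (Set.range u)))
    (a v : EuclideanSpace ℝ (Fin 2)) (hv : det2 a v < 0) :
    ∃ j, det2 a (u j) < 0 := by
  by_contra h
  push_neg at h
  have hconv : Convex ℝ {w : EuclideanSpace ℝ (Fin 2) | 0 ≤ det2 a w} := by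
    intro x hx y hy s t hs ht hst
    simp only [Set.mem_setOf_eq] at *
    have : det2 a (s • x + t • y) = s * det2 a x + t * det2 a y := by
      simp [det2, PiLp.add_apply, PiLp.smul_apply, smul_eq_mul]; ring
    rw [this]
    positivity
  have hsub : convexHull ℝ (Set.range u) ⊆ {w : EuclideanSpace ℝ (Fin 2) | 0 ≤ det2 a w} :=
    convexHull_min (by rintro _ ⟨j, rfl⟩; exact h j) hconv
  have hnhds : convexHull ℝ (Set.range u) ∈ nhds (0 : EuclideanSpace ℝ (Fin 2)) :=
    mem_interior_iff_mem_nhds.mp hhull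
  obtain ⟨ε, hε, hball⟩ := Metric.mem_nhds_iff.mp hnhds
  set c : ℝ := ε / (2 * (‖v‖ + 1)) with hc
  have hvpos : (0:ℝ) < ‖v‖ + 1 := by positivity
  have hcpos : 0 < c := by positivity
  have hmem : c • v ∈ Metric.ball (0 : EuclideanSpace ℝ (Fin 2)) ε := by
    rw [Metric.mem_ball, dist_zero_right, norm_smul, Real.norm_eq_abs, abs_of_pos hcpos]
    calc c * ‖v‖ ≤ c * (‖v‖ + 1) := by nlinarith [norm_nonneg v]
      _ = ε / 2 := by rw [hc]; field_simp
      _ < ε := by linarith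
  have := hsub (hball hmem)
  rw [Set.mem_setOf_eq, det2_smul] at this
  nlinarith

/-- Let `u₁, …, u_k` (`k ≥ 5`) be nonzero, pairwise non-parallel vectors of the plane.
If `0` lies in the interior of the convex hull of `{u₁, …, u_k}`, then there are at least
three indices `i` such that the line `ℝ·uᵢ` strictly separates two of the other vectors,
i.e. there exist `j, l ≠ i` with `det (uᵢ, u_j) > 0 > det (uᵢ, u_l)`. -/
theorem stmt15 (k : ℕ) (hk : 5 ≤ k) (u : Fin k → EuclideanSpace ℝ (Fin 2))
    (hne : ∀ i, u i ≠ 0)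
    (hpar : ∀ i j, i ≠ j → ¬ ∃ c : ℝ, u j = c • u i)
    (hhull : (0 : EuclideanSpace ℝ (Fin 2)) ∈ interior (convexHull ℝ (Set.range u))) :
    3 ≤ {i : Fin k | ∃ j l, j ≠ i ∧ l ≠ i ∧
      0 < det2 (u i) (u j) ∧ det2 (u i) (u l) < 0}.ncard := by
  have huniv : {i : Fin k | ∃ j l, j ≠ i ∧ l ≠ i ∧
      0 < det2 (u i) (u j) ∧ det2 (u i) (u l) < 0} = Set.univ := by
    ext i
    simp only [Set.mem_setOf_eq, Set.mem_univ, iff_true]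
    -- u i has a nonzero coordinate
    have hcoord : u i 0 ≠ 0 ∨ u i 1 ≠ 0 := by
      by_contra hco
      push_neg at hco
      apply hne i
      ext m
      fin_cases m <;> simp [hco.1, hco.2]
    have hnormsq : 0 < (u i 0)^2 + (u i 1)^2 := by
      rcases hcoord with h | h <;> positivity
    -- vector strictly on the negative side of line ℝ · u i
    set v : EuclideanSpace ℝ (Fin 2) := (WithLp.equiv 2 (Fin 2 → ℝ)).symm ![u i 1, -(u i 0)]
      with hvdef
    have hv0 : v 0 = u i 1 := rfl
    have hv1 : v 1 = -(u i 0) := rfl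
    have hvneg : det2 (u i) v < 0 := by
      simp only [det2, hv0, hv1]
      nlinarith
    have hwpos : det2 (u i) (-v) > 0 := by
      have : det2 (u i) (-v) = -det2 (u i) v := by
        simp [det2, PiLp.neg_apply]; ring
      rw [this]; linarith
    obtain ⟨l, hl⟩ := key k u hhull (u i) v hvneg
    have hflip : ∀ w, det2 (-(u i)) w = -det2 (u i) w := by
      intro w; simp [det2, PiLp.neg_apply]; ring
    obtain ⟨j, hj⟩ := key k u hhull (-(u i)) (-v)
      (by rw [hflip]; simpa [det2, PiLp.neg_apply] using hvneg)
    rw [hflip] at hj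
    have hjpos : 0 < det2 (u i) (u j) := by linarith
    have hdii : det2 (u i) (u i) = 0 := by simp [det2]; ring
    refine ⟨j, l, ?_, ?_, hjpos, hl⟩
    · rintro rfl; rw [hdii] at hjpos; linarith
    · rintro rfl; rw [hdii] at hl; linarith
  rw [huniv, Set.ncard_univ, Nat.card_eq_fintype_card, Fintype.card_fin]
  omega
end
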